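/- arXiv:2601.04542 — 2 statements merged into one kernel-verified Lean document; each statement's English description precedes it below -/
import Mathlib

section
/- Let F̃ : ℝ → ℝ be convex, let d̄ ≥ 0 and C ∈ ℝ be constants. Then the function y(h) = (F̃(h + d̄) − C)/h is quasi-convex on (0, ∞), i.e., every sublevel set {h > 0 : y(h) ≤ γ} is convex. -/
theorem stmt2 (F : ℝ → ℝ) (hF : ConvexOn ℝ Set.univ F)
    (dbar : ℝ) (hd : 0 ≤ dbar) (C : ℝ) (γ : ℝ) :
    Convex ℝ {h : ℝ | 0 < h ∧ (F (h + dbar) - C) / h ≤ γ} := by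
  have hg : ConvexOn ℝ Set.univ (fun h : ℝ => F (h + dbar) - C - γ * h) := by
    have h1 : ConvexOn ℝ Set.univ (fun h : ℝ => F (h + dbar)) := by
      have := hF.comp_affineMap (AffineMap.id ℝ ℝ + AffineMap.const ℝ ℝ dbar)
      simpa [Function.comp_def] using this
    have h2 : ConcaveOn ℝ Set.univ (fun h : ℝ => C + γ * h) := by
      apply ConcaveOn.add (concaveOn_const _ convex_univ)
      exact (LinearMap.lsmul ℝ ℝ γ).concaveOn convex_univ
    have := h1.sub h2
    convert this using 2 with h
    · rfl
    · rfl
    simp [Pi.sub_apply]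
    ring
  have hset : {h : ℝ | 0 < h ∧ (F (h + dbar) - C) / h ≤ γ}
      = {h : ℝ | 0 < h} ∩ {h : ℝ | F (h + dbar) - C - γ * h ≤ 0} := by
    ext h
    simp only [Set.mem_setOf_eq, Set.mem_inter_iff]
    constructor
    · rintro ⟨hp, hle⟩
      refine ⟨hp, ?_⟩
      rw [div_le_iff₀ hp] at hle
      linarith
    · rintro ⟨hp, hle⟩
      refine ⟨hp, ?_⟩
      rw [div_le_iff₀ hp]
      linarith
  rw [hset]
  exact (convex_Ioi (0:ℝ)).inter (by simpa using hg.convex_le 0)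
end

section
/- Let f̃ : ℝ → ℝ be non-decreasing, differentiable, and convex, with d̄ ≥ 0. Then U(h) = [h·f̃(h+d̄) − ∫_{d̄}^{h+d̄} f̃(x)dx]/h² is non-decreasing in h on (0, ∞). -/
open intervalIntegral

theorem stmt12 (ft : ℝ → ℝ) (hmono : Monotone ft)
    (hdiff : Differentiable ℝ ft) (hconv : ConvexOn ℝ Set.univ ft)
    (dbar : ℝ) (hd : 0 ≤ dbar) :
    MonotoneOn
      (fun h : ℝ =>
        (h * ft (h + dbar) - ∫ x in dbar..(h + dbar), ft x) / h ^ 2)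
      (Set.Ioi (0:ℝ)) := by
  have cont : Continuous ft := hdiff.continuous
  set U : ℝ → ℝ := fun h =>
     (h * ft (h + dbar) - ∫ x in dbar..(h + dbar), ft x) / h ^ 2 with hU
  -- derivative of U at positive h
  have key : ∀ h : ℝ, 0 < h →
      HasDerivAt U (((h * deriv ft (h + dbar)) * h ^ 2 -
        (h * ft (h + dbar) - ∫ x in dbar..(h + dbar), ft x) * (2 * h)) / (h ^ 2) ^ 2) h := by
    intro h hh
    have hInt : HasDerivAt (fun u : ℝ => ∫ x in dbar..(u + dbar), ft x) (ft (h + dbar)) h := by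
      have h1 : HasDerivAt (fun u : ℝ => ∫ x in dbar..u, ft x) (ft (h + dbar)) (h + dbar) :=
        integral_hasDerivAt_right (cont.intervalIntegrable _ _)
          (cont.stronglyMeasurableAtFilter _ _) cont.continuousAt
      have h2 : HasDerivAt (fun u : ℝ => u + dbar) 1 h :=
        (hasDerivAt_id h).add_const dbar
      simpa [Function.comp_def] using h1.comp h h2
    have hft : HasDerivAt (fun u : ℝ => ft (u + dbar)) (deriv ft (h + dbar)) h := by
      have h2 : HasDerivAt (fun u : ℝ => u + dbar) 1 h := (hasDerivAt_id h).add_const dbar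
      simpa [Function.comp_def] using ((hdiff (h + dbar)).hasDerivAt).comp h h2
    have hN : HasDerivAt (fun u : ℝ => u * ft (u + dbar) - ∫ x in dbar..(u + dbar), ft x)
        (h * deriv ft (h + dbar)) h := by
      have := ((hasDerivAt_id h).mul hft).sub hInt
      simpa [Pi.mul_def, Pi.sub_def] using this
    have := hN.div (hasDerivAt_pow 2 h) (by positivity)
    simpa [hU, Pi.div_def] using this
  have hderiv_nonneg : ∀ h : ℝ, 0 < h → 0 ≤ deriv U h := by
    intro h hh
    rw [(key h hh).deriv]
    set b := h + dbar with hb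
    set c := deriv ft b with hc
    -- main convexity inequality:  h * ft b - ∫ ≤ c * h^2 / 2
    have pointwise : ∀ x ∈ Set.Icc dbar b, ft b - ft x ≤ c * (b - x) := by
      intro x hx
      rcases eq_or_lt_of_le hx.2 with heq | hlt
      · simp [heq]
      · have hs := hconv.slope_le_deriv (Set.mem_univ x) (Set.mem_univ b) hlt
          (hdiff b)
        rw [slope_def_field] at hs
        have hbx : 0 < b - x := by linarith
        calc ft b - ft x = (ft b - ft x) / (b - x) * (b - x) := by
              field_simp
          _ ≤ c * (b - x) := by
              apply mul_le_mul_of_nonneg_right _ hbx.le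
              simpa [div_eq_iff, hc] using hs
    have hab : dbar ≤ b := by simp [hb]; linarith
    have hIle : (∫ x in dbar..b, (ft b - ft x)) ≤ ∫ x in dbar..b, c * (b - x) := by
      apply intervalIntegral.integral_mono_on hab
      · exact ((continuous_const.sub cont).intervalIntegrable _ _)
      · exact ((continuous_const.mul (continuous_const.sub continuous_id)).intervalIntegrable _ _)
      · exact pointwise
    have hI1 : (∫ x in dbar..b, (ft b - ft x)) = h * ft b - ∫ x in dbar..b, ft x := by
      rw [intervalIntegral.integral_sub (intervalIntegrable_const)
        (cont.intervalIntegrable _ _), intervalIntegral.integral_const]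
      have : b - dbar = h := by simp [hb]
      rw [this]; simp [smul_eq_mul]
    have hI2 : (∫ x in dbar..b, c * (b - x)) = c * h ^ 2 / 2 := by
      have : (∫ x in dbar..b, c * (b - x)) = ∫ x in dbar..b, (c * b - c * x) := by
        congr 1; ext x; ring
      have hint2 : IntervalIntegrable (fun x : ℝ => c * x) MeasureTheory.volume dbar b := by
        apply Continuous.intervalIntegrable; continuity
      rw [this, intervalIntegral.integral_sub intervalIntegrable_const hint2,
        intervalIntegral.integral_const, intervalIntegral.integral_const_mul,
        integral_id]
      have hbd : b - dbar = h := by simp [hb]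
      have : b = h + dbar := hb
      rw [this]; simp only [smul_eq_mul]; ring
    have hmain : h * ft b - (∫ x in dbar..b, ft x) ≤ c * h ^ 2 / 2 := by
      rw [← hI1]; rw [hI2] at hIle; exact hIle
    apply div_nonneg _ (by positivity)
    have : (h * c) * h ^ 2 - (h * ft b - ∫ x in dbar..b, ft x) * (2 * h)
        = 2 * h * (c * h ^ 2 / 2 - (h * ft b - ∫ x in dbar..b, ft x)) := by ring
    rw [this]
    have := sub_nonneg.mpr hmain
    positivity
  apply monotoneOn_of_deriv_nonneg (convex_Ioi 0)
  · intro h hh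
    exact ((key h hh).differentiableAt).continuousAt.continuousWithinAt
  · intro h hh
    rw [interior_Ioi] at hh
    exact ((key h hh).differentiableAt).differentiableWithinAt
  · intro h hh
    rw [interior_Ioi] at hh
    exact hderiv_nonneg h hh
end
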